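/- Let m ≥ 1, let A be an associative ring, let θ_1, …, θ_m ∈ A satisfy θ_i·θ_j = −θ_j·θ_i for i ≠ j and θ_i·θ_i = 0 for all i, and let u_1, …, u_m ∈ A be central elements with Σ_{i=1}^m u_i·θ_i = 0 and Σ_{i=1}^m u_i^2 = 1. Then θ_1·θ_2·⋯·θ_m = 0. -/

import Mathlib

open Finset

private lemma range'_split (f : ℕ → A) [Ring A] (s a b : ℕ) :
    ((List.range' s (a + b)).map f).prod
      = ((List.range' s a).map f).prod * ((List.range' (s + a) b).map f).prod := by
  rw [← List.range'_append (s := s) (m := a) (n := b) (step := 1), List.map_append, List.prod_append, Nat.one_mul]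

private lemma sandwich {A : Type*} [Ring A] (f : ℕ → A)
    (hsq : ∀ j, f j * f j = 0)
    (hanti : ∀ j k, j ≠ k → f j * f k = -(f k * f j)) :
    ∀ (l : List ℕ) (j : ℕ) (X : A), (∀ k ∈ l, k ≠ j) →
      f j * ((l.map f).prod * (f j * X)) = 0 := by
  intro l
  induction l with
  | nil =>
      intro j X _
      rw [List.map_nil, List.prod_nil, one_mul, ← mul_assoc, hsq, zero_mul]
  | cons x l ih =>
      intro j X h
      have hx : x ≠ j := h x (List.mem_cons_self (a := x) (l := l))
      rw [List.map_cons, List.prod_cons, mul_assoc, ← mul_assoc (f j) (f x),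
        hanti j x (Ne.symm hx), neg_mul, mul_assoc,
        ih j X (fun k hk => h k (List.mem_cons_of_mem x hk)), mul_zero, neg_zero]

private lemma key {A : Type*} [Ring A] (f : ℕ → A)
    (hsq : ∀ j, f j * f j = 0)
    (hanti : ∀ j k, j ≠ k → f j * f k = -(f k * f j))
    (m i j : ℕ) (him : i < m) (hjm : j < m) (hne : j ≠ i) :
    ((List.range' 0 i).map f).prod
      * (f j * ((List.range' (i + 1) (m - (i + 1))).map f).prod) = 0 := by
  rcases Nat.lt_or_gt_of_ne hne with h | h
  · -- j < i : the left block contains f j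
    have hi : i = j + (1 + (i - (j + 1))) := by omega
    rw [hi, range'_split, range'_split, Nat.zero_add, List.range'_succ,
      List.map_cons, List.prod_cons]
    simp only [List.range'_zero, List.map_nil, List.prod_nil, mul_one, one_mul, mul_assoc]
    rw [sandwich f hsq hanti _ j _ (fun k hk => by
        have := (List.mem_range'_1.mp hk).1
        omega), mul_zero]
  · -- j > i : the right block contains f j
    have hr : m - (i + 1) = (j - (i + 1)) + (1 + (m - (j + 1))) := by omega
    rw [hr, range'_split, range'_split, List.range'_succ,
      List.map_cons, List.prod_cons]
    simp only [List.range'_zero, List.map_nil, List.prod_nil, mul_one, one_mul, mul_assoc]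
    have hj' : i + 1 + (j - (i + 1)) = j := by omega
    rw [hj', sandwich f hsq hanti _ j _ (fun k hk => by
        have h1 := (List.mem_range'_1.mp hk).1
        have h2 := (List.mem_range'_1.mp hk).2
        omega), mul_zero]

/-- If `θ₁, …, θ_m` pairwise anticommute and square to zero, the `u_i` are central,
`Σ u_i·θ_i = 0` and `Σ u_i² = 1`, then `θ₁·θ₂⋯θ_m = 0`. -/
theorem prod_theta_eq_zero (m : ℕ) (hm : 1 ≤ m) {A : Type*} [Ring A]
    (θ u : Fin m → A)
    (hθ : ∀ i j : Fin m, i ≠ j → θ i * θ j = -(θ j * θ i))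
    (hθ2 : ∀ i : Fin m, θ i * θ i = 0)
    (hu : ∀ (i : Fin m) (a : A), Commute (u i) a)
    (h1 : ∑ i : Fin m, u i * θ i = 0)
    (h2 : ∑ i : Fin m, u i ^ 2 = 1) :
    (List.ofFn θ).prod = 0 := by
  classical
  set f : ℕ → A := fun k => if h : k < m then θ ⟨k, h⟩ else 0 with hf
  have hsq : ∀ j, f j * f j = 0 := by
    intro j
    by_cases h : j < m
    · simp only [hf, dif_pos h]; exact hθ2 ⟨j, h⟩
    · simp [hf, dif_neg h]
  have hanti : ∀ j k, j ≠ k → f j * f k = -(f k * f j) := by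
    intro j k hjk
    by_cases hj : j < m
    · by_cases hk : k < m
      · simp only [hf, dif_pos hj, dif_pos hk]
        exact hθ ⟨j, hj⟩ ⟨k, hk⟩ (by simpa [Fin.ext_iff] using hjk)
      · simp [hf, dif_neg hk]
    · simp [hf, dif_neg hj]
  have hfθ : ∀ i : Fin m, f (i : ℕ) = θ i := by
    intro i; simp [hf, i.isLt]
  have hP : (List.ofFn θ).prod = ((List.range' 0 m).map f).prod := by
    congr 1
    apply List.ext_getElem
    · simp
    · intro k h1' h2'
      simp only [List.getElem_ofFn, List.getElem_map, List.getElem_range']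
      rw [Nat.zero_add, Nat.one_mul]
      simp only [List.length_ofFn] at h1'
      simp [hf, h1']
  have hsplit : ∀ i : Fin m, ((List.range' 0 m).map f).prod
      = ((List.range' 0 (i : ℕ)).map f).prod
        * (f (i : ℕ) * ((List.range' ((i : ℕ) + 1) (m - ((i : ℕ) + 1))).map f).prod) := by
    intro i
    have hmi : m = (i : ℕ) + (1 + (m - ((i : ℕ) + 1))) := by omega
    conv_lhs => rw [hmi]
    rw [range'_split, range'_split, Nat.zero_add, List.range'_succ,
      List.map_cons, List.prod_cons]
    simp only [List.range'_zero, List.map_nil, List.prod_nil, mul_one, one_mul, mul_assoc]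
  have step : ∀ i : Fin m, u i * (List.ofFn θ).prod = 0 := by
    intro i
    rw [hP, hsplit i]
    set Pa := ((List.range' 0 (i : ℕ)).map f).prod with hPa
    set Pb := ((List.range' ((i : ℕ) + 1) (m - ((i : ℕ) + 1))).map f).prod with hPb
    have hcomm : u i * (Pa * (f (i : ℕ) * Pb)) = Pa * ((u i * f (i : ℕ)) * Pb) := by
      rw [← mul_assoc, (hu i Pa).eq, mul_assoc, ← mul_assoc (u i), mul_assoc]
    rw [hcomm, hfθ i]
    have hsum : u i * θ i = -∑ j ∈ univ.erase i, u j * θ j := by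
      have := Finset.add_sum_erase univ (fun j => u j * θ j) (mem_univ i)
      rw [h1] at this
      exact eq_neg_of_add_eq_zero_left this
    rw [hsum, neg_mul, mul_neg, Finset.sum_mul, Finset.mul_sum, neg_eq_zero]
    apply Finset.sum_eq_zero
    intro j hj
    have hji : j ≠ i := Finset.ne_of_mem_erase hj
    have hterm : Pa * (u j * θ j * Pb) = u j * (Pa * (f (j : ℕ) * Pb)) := by
      rw [hfθ j]
      calc Pa * (u j * θ j * Pb) = Pa * (u j * (θ j * Pb)) := by rw [mul_assoc]
        _ = Pa * u j * (θ j * Pb) := by rw [mul_assoc]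
        _ = u j * Pa * (θ j * Pb) := by rw [← (hu j Pa).eq]
        _ = u j * (Pa * (θ j * Pb)) := by rw [mul_assoc]
    rw [hterm, hPa, hPb,
      key f hsq hanti m (i : ℕ) (j : ℕ) i.isLt j.isLt
        (fun h => hji (Fin.ext h)), mul_zero]
  calc (List.ofFn θ).prod = (∑ i : Fin m, u i ^ 2) * (List.ofFn θ).prod := by
        rw [h2, one_mul]
    _ = ∑ i : Fin m, u i * (u i * (List.ofFn θ).prod) := by
        rw [Finset.sum_mul]
        exact Finset.sum_congr rfl fun i _ => by rw [sq, mul_assoc]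
    _ = 0 := Finset.sum_eq_zero fun i _ => by rw [step i, mul_zero]
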